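/- For every integer n ≥ 0, Σ_{k=0}^{n} (−1)^k · C(n,k) / (2k+1) = 2^{2n} · (n!)² / (2n+1)!, where C(n,k) denotes the binomial coefficient. -/

import Mathlib

open Finset

lemma aux_sum (n : ℕ) : ∀ x : ℝ, (∀ k : ℕ, k ≤ n → x + k ≠ 0) →
    ∑ k ∈ Finset.range (n + 1), (-1 : ℝ) ^ k * (n.choose k : ℝ) / (x + k) =
      (n.factorial : ℝ) / ∏ k ∈ Finset.range (n + 1), (x + k) := by
  induction n with
  | zero => intro x hx; simp
  | succ n ih =>
    intro x hx
    have hx0 : x ≠ 0 := by simpa using hx 0 (by omega)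
    have h1 : ∀ k : ℕ, k ≤ n → (x + 1) + (k : ℝ) ≠ 0 := by
      intro k hk
      have := hx (k + 1) (by omega)
      push_cast at this
      intro h; apply this; linarith
    have h2 : ∀ k : ℕ, k ≤ n → x + (k : ℝ) ≠ 0 := fun k hk => hx k (by omega)
    -- Split the sum using Pascal's rule
    have key : ∑ k ∈ Finset.range (n + 2), (-1 : ℝ) ^ k * ((n+1).choose k : ℝ) / (x + k)
        = (∑ k ∈ Finset.range (n + 1), (-1 : ℝ) ^ k * (n.choose k : ℝ) / (x + k))
          - ∑ k ∈ Finset.range (n + 1), (-1 : ℝ) ^ k * (n.choose k : ℝ) / ((x + 1) + k) := by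
      rw [Finset.sum_range_succ' (fun k => (-1 : ℝ) ^ k * ((n+1).choose k : ℝ) / (x + k)) (n+1)]
      have split : ∀ i ∈ Finset.range (n + 1),
          (-1 : ℝ) ^ (i+1) * (((n+1).choose (i+1) : ℕ) : ℝ) / (x + (i+1 : ℕ))
          = (-1 : ℝ) ^ (i+1) * (n.choose (i+1) : ℝ) / (x + (i+1 : ℕ))
            + -((-1 : ℝ) ^ i * (n.choose i : ℝ) / ((x + 1) + i)) := by
        intro i hi
        rw [Nat.choose_succ_succ]
        push_cast
        have : (x : ℝ) + (i + 1) = (x + 1) + i := by ring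
        rw [this]
        have hne := h1 i (by simpa using Nat.lt_succ_iff.mp (Finset.mem_range.mp hi))
        field_simp
        ring
      rw [Finset.sum_congr rfl split, Finset.sum_add_distrib]
      have e2 : ∑ i ∈ Finset.range (n + 1),
          (-1 : ℝ) ^ (i+1) * (n.choose (i+1) : ℝ) / (x + (i+1 : ℕ))
          = (∑ k ∈ Finset.range (n + 1), (-1 : ℝ) ^ k * (n.choose k : ℝ) / (x + k))
            - (-1 : ℝ) ^ 0 * (n.choose 0 : ℝ) / (x + (0 : ℕ)) := by
        rw [Finset.sum_range_succ' (fun k => (-1 : ℝ) ^ k * (n.choose k : ℝ) / (x + k)) n]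
        have : ∑ i ∈ Finset.range (n + 1),
            (-1 : ℝ) ^ (i+1) * (n.choose (i+1) : ℝ) / (x + (i+1 : ℕ))
            = ∑ i ∈ Finset.range n,
            (-1 : ℝ) ^ (i+1) * (n.choose (i+1) : ℝ) / (x + (i+1 : ℕ)) := by
          rw [Finset.sum_range_succ, Nat.choose_succ_self]
          simp
        rw [this]; ring
      rw [e2, Finset.sum_neg_distrib]
      simp
      ring
    rw [key, ih x h2, ih (x+1) h1]
    -- now the algebra of products
    have pA : ∏ k ∈ Finset.range (n + 2), (x + (k : ℝ))
        = (∏ k ∈ Finset.range (n + 1), (x + (k : ℝ))) * (x + (n + 1 : ℕ)) := by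
      rw [Finset.prod_range_succ]
    have pB : ∏ k ∈ Finset.range (n + 2), (x + (k : ℝ))
        = (∏ k ∈ Finset.range (n + 1), ((x + 1) + (k : ℝ))) * x := by
      rw [Finset.prod_range_succ' (fun k => x + (k : ℝ)) (n+1)]
      push_cast
      congr 1
      · apply Finset.prod_congr rfl; intro i _; ring
      · simp
    have hPA : (∏ k ∈ Finset.range (n + 1), (x + (k : ℝ))) ≠ 0 :=
      Finset.prod_ne_zero_iff.mpr fun k hk => h2 k (Nat.lt_succ_iff.mp (Finset.mem_range.mp hk))
    have hPB : (∏ k ∈ Finset.range (n + 1), ((x + 1) + (k : ℝ))) ≠ 0 :=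
      Finset.prod_ne_zero_iff.mpr fun k hk => h1 k (Nat.lt_succ_iff.mp (Finset.mem_range.mp hk))
    rw [pA]
    have hxn1 : x + ((n + 1 : ℕ) : ℝ) ≠ 0 := hx (n+1) (le_refl _)
    have hrel : (∏ k ∈ Finset.range (n + 1), ((x + 1) + (k : ℝ))) * x
        = (∏ k ∈ Finset.range (n + 1), (x + (k : ℝ))) * (x + (n + 1 : ℕ)) := by
      rw [← pB, pA]
    rw [Nat.factorial_succ]
    push_cast at hrel hxn1 ⊢
    field_simp
    linear_combination hrel

lemma prod_half (n : ℕ) : ∏ k ∈ Finset.range (n + 1), ((1:ℝ)/2 + k)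
    = ((2 * n + 1).factorial : ℝ) / (2 * 4 ^ n * n.factorial) := by
  induction n with
  | zero => norm_num
  | succ n ih =>
    rw [Finset.prod_range_succ, ih]
    have hfe : ((2 * (n + 1) + 1).factorial : ℝ)
        = (2 * n + 3) * (2 * n + 2) * ((2 * n + 1).factorial : ℝ) := by
      have h1 : 2 * (n + 1) + 1 = (2 * n + 1) + 1 + 1 := by ring
      rw [h1, Nat.factorial_succ, Nat.factorial_succ]; push_cast; ring
    have hfe2 : (((n + 1).factorial : ℕ) : ℝ) = (n + 1) * (n.factorial : ℝ) := by
      rw [Nat.factorial_succ]; push_cast; ring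
    rw [hfe, hfe2]
    have hf : ((2 * n + 1).factorial : ℝ) ≠ 0 := Nat.cast_ne_zero.mpr (Nat.factorial_ne_zero _)
    have hnf : ((n.factorial : ℝ)) ≠ 0 := Nat.cast_ne_zero.mpr (Nat.factorial_ne_zero _)
    push_cast
    field_simp
    ring

/-- For every `n ≥ 0`, `Σ_{k=0}^n (−1)^k·C(n,k)/(2k+1) = 2^{2n}·(n!)²/(2n+1)!`. -/
theorem alternating_binomial_sum (n : ℕ) :
    ∑ k ∈ Finset.range (n + 1), (-1 : ℝ) ^ k * (n.choose k : ℝ) / (2 * k + 1) =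
      (2 : ℝ) ^ (2 * n) * (n.factorial : ℝ) ^ 2 / ((2 * n + 1).factorial : ℝ) := by
  have hx : ∀ k : ℕ, k ≤ n → (1:ℝ)/2 + k ≠ 0 := by
    intro k hk; positivity
  have h := aux_sum n ((1:ℝ)/2) hx
  have e : ∀ k ∈ Finset.range (n + 1),
      (-1 : ℝ) ^ k * (n.choose k : ℝ) / (2 * k + 1)
      = ((-1 : ℝ) ^ k * (n.choose k : ℝ) / ((1:ℝ)/2 + k)) * (1/2) := by
    intro k hk
    have : (2 * (k:ℝ) + 1) ≠ 0 := by positivity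
    field_simp
    ring
  rw [Finset.sum_congr rfl e, ← Finset.sum_mul, h, prod_half]
  have hf : ((2 * n + 1).factorial : ℝ) ≠ 0 := Nat.cast_ne_zero.mpr (Nat.factorial_ne_zero _)
  have hnf : ((n.factorial : ℝ)) ≠ 0 := Nat.cast_ne_zero.mpr (Nat.factorial_ne_zero _)
  have h4 : (2:ℝ) ^ (2 * n) = 4 ^ n := by rw [pow_mul]; norm_num
  rw [h4]
  field_simp
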